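/- Assume each f_i is μ-convex with μ ≥ 0, the family {f_i} has δ-SOD with δ > 0, and set λ = 2δ. Suppose the S-DANE iterates (with full participation) satisfy, for every round r ≥ 0, the accuracy condition Σ_{i=1}^n ‖∇F_{i,r}(x_{i,r+1})‖² ≤ (λ²/4) Σ_{i=1}^n ‖x_{i,r+1} − v^r‖². Let x* be a minimizer of f, D := ‖x⁰ − x*‖, p := 1 + μ/λ, and for R ≥ 1 define the weighted average x̄^R := (Σ_{r=1}^R p^r x^r)/(Σ_{r=1}^R p^r). Then for every R ≥ 1: f(x̄^R) − f(x*) ≤ δD²/R, and moreover if μ > 0 then f(x̄^R) − f(x*) ≤ μD² / (2[(1 + μ/(2δ))^R − 1]). -/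

import Mathlib

open Finset RealInnerProductSpace

set_option maxHeartbeats 1000000

section SdaneAux

variable {E : Type*} [NormedAddCommGroup E] [InnerProductSpace ℝ E] [CompleteSpace E]

lemma grad_avg (n : ℕ) (f' : Fin n → E → ℝ)
    (hdiff : ∀ i, Differentiable ℝ (f' i)) (w : E) :
    gradient (fun x => (1 / (n : ℝ)) * ∑ i, f' i x) w
      = (1 / (n : ℝ)) • ∑ i, gradient (f' i) w := by
  have H : HasFDerivAt (fun x => (1 / (n : ℝ)) * ∑ i, f' i x)
      ((1 / (n : ℝ)) • ∑ i, fderiv ℝ (f' i) w) w := by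
    exact (HasFDerivAt.fun_sum (fun i _ => (hdiff i w).hasFDerivAt)).const_mul _
  have := H.hasGradientAt.gradient
  rw [this]
  simp only [map_smul, map_sum]
  rfl

lemma grad_sub (f g : E → ℝ) (hf : Differentiable ℝ f) (hg : Differentiable ℝ g) (w : E) :
    gradient (fun z => f z - g z) w = gradient f w - gradient g w := by
  have H : HasFDerivAt (fun z => f z - g z) (fderiv ℝ f w - fderiv ℝ g w) w :=
    (hf w).hasFDerivAt.sub (hg w).hasFDerivAt
  rw [H.hasGradientAt.gradient]
  simp only [map_sub]
  rfl

lemma four_pt (a b c d : E) :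
    ⟪a - b, c - d⟫ = (‖a - d‖^2 - ‖b - d‖^2 + ‖b - c‖^2 - ‖a - c‖^2) / 2 := by
  simp only [norm_sub_sq_real, inner_sub_left, inner_sub_right]
  ring

lemma round_bound (n : ℕ) (hn : 0 < n) (lam μ : ℝ) (hlam : 0 < lam) (hμ : 0 ≤ μ)
    (v xp vp xstar : E) (y g q w : Fin n → E) (gfxp gfv : E)
    (Fy Fs Fp : Fin n → ℝ)
    (hgfxp : ∑ i, w i = (n : ℝ) • gfxp)
    (hgfv : ∑ i, q i = (n : ℝ) • gfv)
    (hconv1 : ∀ i, Fy i + ⟪g i, xstar - y i⟫ + μ/2 * ‖y i - xstar‖^2 ≤ Fs i)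
    (hconv2 : ∀ i, Fp i + ⟪w i, y i - xp⟫ + μ/2 * ‖xp - y i‖^2 ≤ Fy i)
    (hacc : ∑ i, ‖g i + gfv - q i + lam • (y i - v)‖^2 ≤ lam^2/4 * ∑ i, ‖y i - v‖^2)
    (hsod : ∑ i, ‖(gfxp - w i) - (gfv - q i)‖^2 ≤ lam^2/4 * ((n:ℝ) * ‖xp - v‖^2))
    (hxp : (∑ i, y i) = (n : ℝ) • xp)
    (hvp : vp = (lam + μ)⁻¹ • (lam • v + μ • xp - (1/(n:ℝ)) • ∑ i, g i)) :
    ∑ i, Fp i - ∑ i, Fs i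
      ≤ (n:ℝ) * (lam/2 * ‖v - xstar‖^2 - (lam+μ)/2 * ‖vp - xstar‖^2) := by
  have hnR : (0:ℝ) < n := Nat.cast_pos.mpr hn
  have hne : (n:ℝ) ≠ 0 := ne_of_gt hnR
  have hlμ : (0:ℝ) < lam + μ := by linarith
  have hlm : lam + μ ≠ 0 := ne_of_gt hlμ
  -- sum of deviations is zero
  have hconst : ∀ z : E, ∑ _i : Fin n, z = (n:ℝ) • z := fun z => by
    rw [Finset.sum_const, Finset.card_univ, Fintype.card_fin, ← Nat.cast_smul_eq_nsmul ℝ]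
  have hΔ0 : ∑ i, (y i - xp) = 0 := by
    rw [Finset.sum_sub_distrib, hxp, hconst, sub_self]
  -- base decomposition of squared distances
  have base : ∀ z : E, ∑ i, ‖y i - z‖^2 = ∑ i, ‖y i - xp‖^2 + (n:ℝ) * ‖xp - z‖^2 := by
    intro z
    have hper : ∀ i : Fin n, ‖y i - z‖^2
        = ‖y i - xp‖^2 + 2*⟪y i - xp, xp - z⟫ + ‖xp - z‖^2 := fun i => by
      rw [show y i - z = (y i - xp) + (xp - z) by abel]
      rw [norm_add_sq_real]
    rw [Finset.sum_congr rfl fun i _ => hper i, Finset.sum_add_distrib,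
      Finset.sum_add_distrib, ← Finset.mul_sum, ← sum_inner, hΔ0, inner_zero_left,
      Finset.sum_const, Finset.card_univ, Fintype.card_fin, nsmul_eq_mul]
    ring
  -- sum of e_i in closed form
  have hsum_e : ∑ i, (g i + gfv - q i + lam • (y i - v))
      = ∑ i, g i + lam • ((n:ℝ) • xp - (n:ℝ) • v) := by
    rw [Finset.sum_add_distrib, Finset.sum_sub_distrib, Finset.sum_add_distrib,
      ← Finset.smul_sum, Finset.sum_sub_distrib, hxp, hgfv, hconst gfv, hconst v]
    abel
  -- relation between vp - xp and the average error
  have hvpx : (lam + μ) • (xp - vp) = (1/(n:ℝ)) • ∑ i, (g i + gfv - q i + lam • (y i - v)) := by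
    rw [hsum_e, hvp, smul_sub, smul_inv_smul₀ hlm]
    match_scalars <;> field_simp <;> ring
  -- Jensen for the error average
  have hA5 : (n:ℝ) * ((lam+μ)^2 * ‖xp - vp‖^2) ≤ ∑ i, ‖g i + gfv - q i + lam • (y i - v)‖^2 := by
    have h1 : ((lam+μ) * ‖xp - vp‖)^2 = ((1/(n:ℝ)) * ‖∑ i, (g i + gfv - q i + lam • (y i - v))‖)^2 := by
      rw [show (lam+μ) * ‖xp - vp‖ = ‖(lam+μ) • (xp - vp)‖ by
          rw [norm_smul, Real.norm_eq_abs, abs_of_pos hlμ]]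
      rw [hvpx, norm_smul, Real.norm_eq_abs, abs_of_pos (by positivity : (0:ℝ) < 1/(n:ℝ))]
    have h2 : ‖∑ i, (g i + gfv - q i + lam • (y i - v))‖^2
        ≤ (n:ℝ) * ∑ i, ‖g i + gfv - q i + lam • (y i - v)‖^2 := by
      calc ‖∑ i, (g i + gfv - q i + lam • (y i - v))‖^2
          ≤ (∑ i, ‖g i + gfv - q i + lam • (y i - v)‖)^2 := by
            apply pow_le_pow_left₀ (norm_nonneg _) (norm_sum_le _ _)
        _ ≤ (#(univ : Finset (Fin n)) : ℝ) * ∑ i, ‖g i + gfv - q i + lam • (y i - v)‖^2 :=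
            sq_sum_le_card_mul_sum_sq
        _ = (n:ℝ) * ∑ i, ‖g i + gfv - q i + lam • (y i - v)‖^2 := by
            rw [Finset.card_univ, Fintype.card_fin]
    have h3 : (lam+μ)^2 * ‖xp - vp‖^2 = (1/(n:ℝ))^2 * ‖∑ i, (g i + gfv - q i + lam • (y i - v))‖^2 := by
      nlinarith [h1]
    rw [h3]
    rw [show (n:ℝ) * ((1/(n:ℝ))^2 * ‖∑ i, (g i + gfv - q i + lam • (y i - v))‖^2)
        = (1/(n:ℝ)) * ‖∑ i, (g i + gfv - q i + lam • (y i - v))‖^2 by field_simp]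
    calc (1/(n:ℝ)) * ‖∑ i, (g i + gfv - q i + lam • (y i - v))‖^2
        ≤ (1/(n:ℝ)) * ((n:ℝ) * ∑ i, ‖g i + gfv - q i + lam • (y i - v)‖^2) := by
          apply mul_le_mul_of_nonneg_left h2 (by positivity)
      _ = ∑ i, ‖g i + gfv - q i + lam • (y i - v)‖^2 := by field_simp
  -- summed convexity inequalities
  have hs1 : ∑ i, Fy i + ∑ i, ⟪g i, xstar - y i⟫ + μ/2 * ∑ i, ‖y i - xstar‖^2
      ≤ ∑ i, Fs i := by
    have h := Finset.sum_le_sum (fun i (_ : i ∈ univ) => hconv1 i)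
    simpa [Finset.sum_add_distrib, ← Finset.mul_sum] using h
  have hs2 : ∑ i, Fp i + ∑ i, ⟪w i, y i - xp⟫ + μ/2 * ∑ i, ‖xp - y i‖^2
      ≤ ∑ i, Fy i := by
    have h := Finset.sum_le_sum (fun i (_ : i ∈ univ) => hconv2 i)
    simpa [Finset.sum_add_distrib, ← Finset.mul_sum] using h
  -- the per-client algebraic identity
  have hper : ∀ i : Fin n, -⟪g i, xstar - y i⟫ - ⟪w i, y i - xp⟫
      = ⟪g i + gfv - q i + lam • (y i - v), y i - xp⟫
        + ⟪(gfxp - w i) - (gfv - q i), y i - xp⟫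
        - lam * ‖y i - xp‖^2 + ⟪g i, xp - xstar⟫
        - ⟪gfxp + lam • (xp - v), y i - xp⟫ := by
    intro i
    rw [show ‖y i - xp‖^2 = ⟪y i - xp, y i - xp⟫ from (real_inner_self_eq_norm_sq _).symm]
    simp only [inner_sub_left, inner_add_left, inner_sub_right, inner_add_right,
      real_inner_smul_left]
    ring
  -- summed identity
  have hC3 : -(∑ i, ⟪g i, xstar - y i⟫) - (∑ i, ⟪w i, y i - xp⟫)
      = (∑ i, ⟪g i + gfv - q i + lam • (y i - v), y i - xp⟫)
        + (∑ i, ⟪(gfxp - w i) - (gfv - q i), y i - xp⟫)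
        - lam * (∑ i, ‖y i - xp‖^2) + ⟪∑ i, g i, xp - xstar⟫ := by
    have h := Finset.sum_congr rfl (fun i (_ : i ∈ univ) => hper i)
    simp only [Finset.sum_add_distrib, Finset.sum_sub_distrib, Finset.sum_neg_distrib,
      ← Finset.mul_sum, ← sum_inner] at h
    rw [show (∑ i, ⟪gfxp + lam • (xp - v), y i - xp⟫) = 0 by
      rw [← inner_sum, hΔ0, inner_zero_right]] at h
    linarith [h]
  -- rewrite the average gradient direction
  have hsumg : ∑ i, g i = (n:ℝ) • (lam • (v - vp) + μ • (xp - vp)) := by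
    have h1 : (lam+μ) • vp = lam • v + μ • xp - (1/(n:ℝ)) • ∑ i, g i := by
      rw [hvp, smul_inv_smul₀ hlm]
    have h2 : (1/(n:ℝ)) • ∑ i, g i = lam • v + μ • xp - (lam+μ) • vp := by
      rw [h1]; abel
    have h3 : ∑ i, g i = (n:ℝ) • ((1/(n:ℝ)) • ∑ i, g i) := by
      rw [smul_smul, mul_one_div, div_self hne, one_smul]
    rw [h3, h2]
    congr 1
    module
  have hC4 : ⟪∑ i, g i, xp - xstar⟫
      = (n:ℝ) * (lam * ((‖v - xstar‖^2 - ‖vp - xstar‖^2 + ‖vp - xp‖^2 - ‖xp - v‖^2)/2)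
        + μ * ((‖xp - xstar‖^2 - ‖vp - xstar‖^2 + ‖vp - xp‖^2)/2)) := by
    rw [hsumg, real_inner_smul_left]
    have h1 : ⟪v - vp, xp - xstar⟫
        = (‖v - xstar‖^2 - ‖vp - xstar‖^2 + ‖vp - xp‖^2 - ‖xp - v‖^2)/2 := by
      rw [four_pt v vp xp xstar, norm_sub_rev v xp]
    have h2 : ⟪xp - vp, xp - xstar⟫
        = (‖xp - xstar‖^2 - ‖vp - xstar‖^2 + ‖vp - xp‖^2)/2 := by
      have := four_pt xp vp xp xstar
      rw [sub_self, norm_zero] at this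
      rw [this]; ring
    rw [← h1, ← h2]
    simp only [inner_add_left, real_inner_smul_left]
    try ring
  -- Young's inequality sums
  have hA1 : lam * ∑ i, ⟪(gfxp - w i) - (gfv - q i), y i - xp⟫
      ≤ 3/4 * ∑ i, ‖(gfxp - w i) - (gfv - q i)‖^2 + lam^2/3 * ∑ i, ‖y i - xp‖^2 := by
    rw [Finset.mul_sum]
    have h : ∀ i : Fin n, lam * ⟪(gfxp - w i) - (gfv - q i), y i - xp⟫
        ≤ 3/4 * ‖(gfxp - w i) - (gfv - q i)‖^2 + lam^2/3 * ‖y i - xp‖^2 := by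
      intro i
      have h1 := real_inner_le_norm ((gfxp - w i) - (gfv - q i)) (y i - xp)
      have h2 := mul_le_mul_of_nonneg_left h1 hlam.le
      nlinarith [sq_nonneg (3*‖(gfxp - w i) - (gfv - q i)‖ - 2*lam*‖y i - xp‖)]
    calc ∑ i, lam * ⟪(gfxp - w i) - (gfv - q i), y i - xp⟫
        ≤ ∑ i, (3/4 * ‖(gfxp - w i) - (gfv - q i)‖^2 + lam^2/3 * ‖y i - xp‖^2) :=
          Finset.sum_le_sum (fun i _ => h i)
      _ = 3/4 * ∑ i, ‖(gfxp - w i) - (gfv - q i)‖^2 + lam^2/3 * ∑ i, ‖y i - xp‖^2 := by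
          rw [Finset.sum_add_distrib, ← Finset.mul_sum, ← Finset.mul_sum]
  have hA2 : lam * ∑ i, ⟪g i + gfv - q i + lam • (y i - v), y i - xp⟫
      ≤ 5/7 * ∑ i, ‖g i + gfv - q i + lam • (y i - v)‖^2 + 7/20*lam^2 * ∑ i, ‖y i - xp‖^2 := by
    rw [Finset.mul_sum]
    have h : ∀ i : Fin n, lam * ⟪g i + gfv - q i + lam • (y i - v), y i - xp⟫
        ≤ 5/7 * ‖g i + gfv - q i + lam • (y i - v)‖^2 + 7/20*lam^2 * ‖y i - xp‖^2 := by
      intro i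
      have h1 := real_inner_le_norm (g i + gfv - q i + lam • (y i - v)) (y i - xp)
      have h2 := mul_le_mul_of_nonneg_left h1 hlam.le
      nlinarith [sq_nonneg (10*‖g i + gfv - q i + lam • (y i - v)‖ - 7*lam*‖y i - xp‖)]
    calc ∑ i, lam * ⟪g i + gfv - q i + lam • (y i - v), y i - xp⟫
        ≤ ∑ i, (5/7 * ‖g i + gfv - q i + lam • (y i - v)‖^2 + 7/20*lam^2 * ‖y i - xp‖^2) :=
          Finset.sum_le_sum (fun i _ => h i)
      _ = 5/7 * ∑ i, ‖g i + gfv - q i + lam • (y i - v)‖^2 + 7/20*lam^2 * ∑ i, ‖y i - xp‖^2 := by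
          rw [Finset.sum_add_distrib, ← Finset.mul_sum, ← Finset.mul_sum]
  -- the accuracy bound, decomposed
  have hacc' : ∑ i, ‖g i + gfv - q i + lam • (y i - v)‖^2
      ≤ lam^2/4 * (∑ i, ‖y i - xp‖^2 + (n:ℝ) * ‖xp - v‖^2) := by
    rw [← base v]; exact hacc
  -- error bound with lam instead of (lam+μ)
  have hA5' : lam * ((lam+μ) * ((n:ℝ) * ‖vp - xp‖^2))
      ≤ ∑ i, ‖g i + gfv - q i + lam • (y i - v)‖^2 := by
    rw [norm_sub_rev vp xp]
    have hnn : (0:ℝ) ≤ μ * (lam+μ) * ((n:ℝ) * ‖xp - vp‖^2) := by positivity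
    nlinarith [hA5, hnn]
  -- the key slack inequality (★)
  have hstar : (∑ i, ⟪g i + gfv - q i + lam • (y i - v), y i - xp⟫)
      + (∑ i, ⟪(gfxp - w i) - (gfv - q i), y i - xp⟫)
      + (n:ℝ) * ((lam+μ)/2 * ‖vp - xp‖^2)
      ≤ (lam+μ) * (∑ i, ‖y i - xp‖^2) + lam/2 * ((n:ℝ) * ‖xp - v‖^2) := by
    have hmul : lam * ((∑ i, ⟪g i + gfv - q i + lam • (y i - v), y i - xp⟫)
        + (∑ i, ⟪(gfxp - w i) - (gfv - q i), y i - xp⟫)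
        + (n:ℝ) * ((lam+μ)/2 * ‖vp - xp‖^2))
        ≤ lam * ((lam+μ) * (∑ i, ‖y i - xp‖^2) + lam/2 * ((n:ℝ) * ‖xp - v‖^2)) := by
      have hSd : (0:ℝ) ≤ ∑ i, ‖y i - xp‖^2 :=
        Finset.sum_nonneg (fun i _ => sq_nonneg _)
      have hnu : (0:ℝ) ≤ (n:ℝ) * ‖xp - v‖^2 := by positivity
      have hmSd : (0:ℝ) ≤ lam * μ * ∑ i, ‖y i - xp‖^2 := by positivity
      have h1p : (0:ℝ) ≤ lam^2 * ∑ i, ‖y i - xp‖^2 := by positivity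
      have h2p : (0:ℝ) ≤ lam^2 * ((n:ℝ) * ‖xp - v‖^2) := by positivity
      linarith [hA1, hA2, hA5', hacc', hsod, hmSd, h1p, h2p]
    exact le_of_mul_le_mul_left hmul hlam
  -- assemble everything
  have hfin := hC3
  rw [hC4] at hfin
  have hbase1 : ∑ i, ‖y i - xstar‖^2 = ∑ i, ‖y i - xp‖^2 + (n:ℝ) * ‖xp - xstar‖^2 :=
    base xstar
  have hbase2 : ∑ i, ‖xp - y i‖^2 = ∑ i, ‖y i - xp‖^2 := by
    exact Finset.sum_congr rfl (fun i _ => by rw [norm_sub_rev])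
  rw [hbase1] at hs1
  rw [hbase2] at hs2
  linarith [hs1, hs2, hfin, hstar]

lemma telescope_sdane (p lam : ℝ) (hp : 1 ≤ p) (hlam : 0 ≤ lam) (φ Ψ : ℕ → ℝ)
    (hΨ : ∀ r, 0 ≤ Ψ r)
    (hkey : ∀ r, φ (r+1) ≤ lam/2 * Ψ r - (p*lam)/2 * Ψ (r+1)) :
    ∀ R, (∑ r ∈ Icc 1 R, p^r * φ r) + lam/2 * p^(R+1) * Ψ R ≤ lam/2 * p * Ψ 0 := by
  intro R
  induction R with
  | zero => simp [pow_one]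
  | succ R ih =>
    rw [Finset.sum_Icc_succ_top (Nat.one_le_iff_ne_zero.mpr (Nat.succ_ne_zero R))]
    have h1 := mul_le_mul_of_nonneg_left (hkey R)
      (pow_nonneg (le_trans zero_le_one hp) (R+1))
    have h3 : lam/2 * p^(R+1+1) * Ψ (R+1) = p^(R+1) * (p*lam/2 * Ψ (R+1)) := by
      rw [show R+1+1 = R+2 from rfl, pow_succ p (R+1)]; ring
    linarith [h1, ih, h3]

lemma geo_sdane (p : ℝ) : ∀ R : ℕ, (p - 1) * ∑ r ∈ Icc 1 R, p^r = p^(R+1) - p := by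
  intro R
  induction R with
  | zero => simp
  | succ R ih =>
    rw [Finset.sum_Icc_succ_top (Nat.one_le_iff_ne_zero.mpr (Nat.succ_ne_zero R))]
    have h2 : p^(R+1+1) = p^(R+1) * p := pow_succ p (R+1)
    nlinarith [ih, h2]



end SdaneAux

/-- S-DANE with full client participation: communication complexity bounds
(Theorem 3.3 / `thm:S-DANE-Main`). -/
theorem sdane_full_participation
    {E : Type*} [NormedAddCommGroup E] [InnerProductSpace ℝ E] [CompleteSpace E]
    (n : ℕ) (hn : 0 < n)
    (f' : Fin n → E → ℝ) (hdiff : ∀ i, Differentiable ℝ (f' i))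
    (f : E → ℝ) (hfdef : f = fun x => (1 / (n : ℝ)) * ∑ i, f' i x)
    (μ : ℝ) (hμ : 0 ≤ μ)
    (hconv : ∀ i, ∀ x y : E,
      f' i y ≥ f' i x + ⟪gradient (f' i) x, y - x⟫ + (μ / 2) * ‖x - y‖ ^ 2)
    (δ : ℝ) (hδ : 0 < δ)
    (hSOD : ∀ x y : E,
      (1 / (n : ℝ)) * ∑ i, ‖gradient (fun z => f z - f' i z) x
          - gradient (fun z => f z - f' i z) y‖ ^ 2 ≤ δ ^ 2 * ‖x - y‖ ^ 2)
    (lam : ℝ) (hlam : lam = 2 * δ)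
    (x v : ℕ → E) (xi : Fin n → ℕ → E)
    (hv0 : v 0 = x 0)
    (hxrec : ∀ r, x (r + 1) = (1 / (n : ℝ)) • ∑ i, xi i r)
    (hvrec : ∀ r, v (r + 1) = (lam + μ)⁻¹ •
      (lam • v r + μ • x (r + 1) - (1 / (n : ℝ)) • ∑ i, gradient (f' i) (xi i r)))
    (hacc : ∀ r, ∑ i, ‖gradient (f' i) (xi i r) + gradient f (v r)
          - gradient (f' i) (v r) + lam • (xi i r - v r)‖ ^ 2
      ≤ (lam ^ 2 / 4) * ∑ i, ‖xi i r - v r‖ ^ 2)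
    (xstar : E) (hstar : ∀ y, f xstar ≤ f y)
    (D : ℝ) (hD : D = ‖x 0 - xstar‖)
    (p : ℝ) (hp : p = 1 + μ / lam)
    (xbar : ℕ → E)
    (hxbar : ∀ R, xbar R = (∑ r ∈ Icc 1 R, p ^ r)⁻¹ • ∑ r ∈ Icc 1 R, p ^ r • x r) :
    ∀ R : ℕ, 1 ≤ R →
      f (xbar R) - f xstar ≤ δ * D ^ 2 / R ∧
      (0 < μ →
        f (xbar R) - f xstar ≤ μ * D ^ 2 / (2 * ((1 + μ / (2 * δ)) ^ R - 1))) := by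
  intro R hR
  have hnR : (0:ℝ) < n := Nat.cast_pos.mpr hn
  have hne : (n:ℝ) ≠ 0 := ne_of_gt hnR
  have hlampos : 0 < lam := by rw [hlam]; linarith
  have hlμ : 0 < lam + μ := by linarith
  have hdivnn : 0 ≤ μ / lam := div_nonneg hμ hlampos.le
  have hp0 : 0 < p := by rw [hp]; linarith
  have hp1 : 1 ≤ p := by rw [hp]; linarith
  have hplam : p * lam = lam + μ := by rw [hp]; field_simp
  have hfd : Differentiable ℝ f := by
    rw [hfdef]
    exact Differentiable.const_mul (Differentiable.fun_sum fun i _ => hdiff i) _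
  have hgradf : ∀ w : E, gradient f w = (1/(n:ℝ)) • ∑ i, gradient (f' i) w := by
    intro w; rw [hfdef]; exact grad_avg n f' hdiff w
  have hgradsum : ∀ w : E, ∑ i, gradient (f' i) w = (n:ℝ) • gradient f w := by
    intro w
    rw [hgradf w, smul_smul, show (n:ℝ) * (1/(n:ℝ)) = 1 by field_simp, one_smul]
  have hgradh : ∀ (i : Fin n) (w : E),
      gradient (fun z => f z - f' i z) w = gradient f w - gradient (f' i) w :=
    fun i w => grad_sub f (f' i) hfd (hdiff i) w
  -- the per-round inequality
  have KEY : ∀ r, f (x (r+1)) - f xstar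
      ≤ lam/2 * ‖v r - xstar‖^2 - p * lam/2 * ‖v (r+1) - xstar‖^2 := by
    intro r
    have hxp' : (∑ i, xi i r) = (n:ℝ) • x (r+1) := by
      rw [hxrec r, smul_smul, show (n:ℝ) * (1/(n:ℝ)) = 1 by field_simp, one_smul]
    have hsod' : ∑ i, ‖(gradient f (x (r+1)) - gradient (f' i) (x (r+1)))
        - (gradient f (v r) - gradient (f' i) (v r))‖^2
        ≤ lam^2/4 * ((n:ℝ) * ‖x (r+1) - v r‖^2) := by
      have h := hSOD (x (r+1)) (v r)
      simp only [hgradh] at h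
      have hd2 : δ^2 = lam^2/4 := by rw [hlam]; ring
      rw [hd2] at h
      have h2 := mul_le_mul_of_nonneg_left h hnR.le
      rw [← mul_assoc, mul_one_div, div_self hne, one_mul] at h2
      linarith [h2]
    have hrb := round_bound n hn lam μ hlampos hμ (v r) (x (r+1)) (v (r+1)) xstar
      (fun i => xi i r) (fun i => gradient (f' i) (xi i r))
      (fun i => gradient (f' i) (v r)) (fun i => gradient (f' i) (x (r+1)))
      (gradient f (x (r+1))) (gradient f (v r))
      (fun i => f' i (xi i r)) (fun i => f' i xstar) (fun i => f' i (x (r+1)))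
      (hgradsum (x (r+1))) (hgradsum (v r))
      (fun i => hconv i (xi i r) xstar)
      (fun i => hconv i (x (r+1)) (xi i r))
      (hacc r) hsod' hxp' (hvrec r)
    have h2 := mul_le_mul_of_nonneg_left hrb (by positivity : (0:ℝ) ≤ 1/(n:ℝ))
    have h3 : (1/(n:ℝ)) * ((n:ℝ) * (lam/2 * ‖v r - xstar‖^2
        - (lam+μ)/2 * ‖v (r+1) - xstar‖^2))
        = lam/2 * ‖v r - xstar‖^2 - (lam+μ)/2 * ‖v (r+1) - xstar‖^2 := by
      field_simp
    rw [show p * lam/2 * ‖v (r+1) - xstar‖^2 = (lam+μ)/2 * ‖v (r+1) - xstar‖^2 by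
      rw [← hplam]]
    simp only [hfdef]
    rw [h3] at h2
    linarith [h2]
  -- telescoping
  have hT := telescope_sdane p lam hp1 hlampos.le (fun r => f (x r) - f xstar)
    (fun r => ‖v r - xstar‖^2) (fun r => sq_nonneg _) KEY R
  have hxb := hxbar R
  set W := ∑ r ∈ Icc 1 R, p^r with hWdef
  have hcard : (Icc 1 R).card = R := by rw [Nat.card_Icc]; omega
  have hWge : (R:ℝ) * p ≤ W := by
    have h1 : ∀ r ∈ Icc 1 R, p ≤ p^r := by
      intro r hr
      have h1r : 1 ≤ r := (Finset.mem_Icc.mp hr).1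
      calc p = p^1 := (pow_one p).symm
        _ ≤ p^r := pow_le_pow_right₀ hp1 h1r
    calc (R:ℝ) * p = ∑ _r ∈ Icc 1 R, p := by rw [Finset.sum_const, hcard, nsmul_eq_mul]
      _ ≤ W := Finset.sum_le_sum h1
  have hR1 : (1:ℝ) ≤ (R:ℝ) := by exact_mod_cast hR
  have hWpos : 0 < W := lt_of_lt_of_le (by nlinarith) hWge
  have hWne : W ≠ 0 := ne_of_gt hWpos
  have hxw : (∑ r ∈ Icc 1 R, p^r • x r) = W • xbar R := by
    rw [hxb, smul_inv_smul₀ hWne]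
  -- Jensen step
  have hconvf : ∀ z : E,
      f (xbar R) + ⟪(1/(n:ℝ)) • ∑ i, gradient (f' i) (xbar R), z - xbar R⟫ ≤ f z := by
    intro z
    have h := Finset.sum_le_sum (fun i (_ : i ∈ univ) => hconv i (xbar R) z)
    rw [Finset.sum_add_distrib, Finset.sum_add_distrib] at h
    have hμ0 : (0:ℝ) ≤ ∑ _i : Fin n, (μ/2) * ‖xbar R - z‖^2 := by positivity
    have hin : ⟪(1/(n:ℝ)) • ∑ i, gradient (f' i) (xbar R), z - xbar R⟫
        = (1/(n:ℝ)) * ∑ i, ⟪gradient (f' i) (xbar R), z - xbar R⟫ := by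
      rw [real_inner_smul_left, sum_inner]
    simp only [hfdef]
    rw [hin]
    have h2 := mul_le_mul_of_nonneg_left h (by positivity : (0:ℝ) ≤ 1/(n:ℝ))
    have h4 := mul_le_mul_of_nonneg_left hμ0 (by positivity : (0:ℝ) ≤ 1/(n:ℝ))
    rw [mul_zero] at h4
    nlinarith [h2, h4]
  have hJ : W * f (xbar R) ≤ ∑ r ∈ Icc 1 R, p^r * f (x r) := by
    have h1 : ∀ r ∈ Icc 1 R, p^r * f (xbar R)
        + ⟪(1/(n:ℝ)) • ∑ i, gradient (f' i) (xbar R), p^r • (x r - xbar R)⟫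
        ≤ p^r * f (x r) := by
      intro r _
      have h := hconvf (x r)
      have h2 := mul_le_mul_of_nonneg_left h (pow_nonneg hp0.le r)
      rw [real_inner_smul_right]
      nlinarith [h2]
    have hsum := Finset.sum_le_sum h1
    rw [Finset.sum_add_distrib, ← Finset.sum_mul, ← inner_sum] at hsum
    have hzero : ∑ r ∈ Icc 1 R, p^r • (x r - xbar R) = 0 := by
      simp only [smul_sub]
      rw [Finset.sum_sub_distrib, ← Finset.sum_smul, hxw]
      exact sub_self _
    rw [hzero, inner_zero_right] at hsum
    linarith [hsum]
  have hsplit : ∑ r ∈ Icc 1 R, p^r * (f (x r) - f xstar)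
      = (∑ r ∈ Icc 1 R, p^r * f (x r)) - W * f xstar := by
    rw [Finset.sum_congr rfl (fun r (_ : r ∈ Icc 1 R) => mul_sub (p^r) (f (x r)) (f xstar)),
      Finset.sum_sub_distrib, ← Finset.sum_mul, ← hWdef]
  have hTT : W * (f (xbar R) - f xstar) ≤ lam/2 * p * D^2 := by
    have hpos : (0:ℝ) ≤ lam/2 * p^(R+1) * ‖v R - xstar‖^2 := by positivity
    rw [hv0] at hT
    have hD2 : ‖x 0 - xstar‖^2 = D^2 := by rw [hD]
    rw [hD2] at hT
    nlinarith [hT, hJ, hsplit, hpos]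
  have hfnn : 0 ≤ f (xbar R) - f xstar := by linarith [hstar (xbar R)]
  have hRpos : (0:ℝ) < R := by linarith
  constructor
  · rw [le_div_iff₀ hRpos]
    have h1 : (f (xbar R) - f xstar) * ((R:ℝ) * p) ≤ (f (xbar R) - f xstar) * W :=
      mul_le_mul_of_nonneg_left hWge hfnn
    have h3 : ((f (xbar R) - f xstar) * (R:ℝ)) * p ≤ (lam/2 * D^2) * p := by
      nlinarith [h1, hTT]
    have h4 := le_of_mul_le_mul_right h3 hp0
    rw [hlam] at h4
    linarith [h4]
  · intro hμpos
    have hp1' : 1 < p := by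
      have : 0 < μ/lam := div_pos hμpos hlampos
      rw [hp]; linarith
    have hpR : 1 < p^R := one_lt_pow₀ hp1' (by omega : R ≠ 0)
    have hden : (0:ℝ) < 2*(p^R - 1) := by linarith
    have hpp : (1 + μ/(2*δ)) = p := by rw [hp, hlam]
    rw [hpp, le_div_iff₀ hden]
    have hgeo := geo_sdane p R
    have hq : (p-1) * W = p * (p^R - 1) := by rw [hgeo, pow_succ]; ring
    have h5 := mul_le_mul_of_nonneg_left hTT (by linarith : (0:ℝ) ≤ 2*(p-1))
    have key2 : p * ((f (xbar R) - f xstar) * (2*(p^R - 1))) ≤ p * (μ * D^2) := by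
      have hc : p * ((f (xbar R) - f xstar) * (2*(p^R - 1)))
          = 2*(p-1) * (W * (f (xbar R) - f xstar)) := by
        linear_combination (-2*(f (xbar R) - f xstar)) * hq
      have hr : 2*(p-1) * (lam/2 * p * D^2) = p * (μ * D^2) := by
        linear_combination (p*D^2) * hplam
      rw [hc, ← hr]
      exact h5
    exact le_of_mul_le_mul_left key2 hp0
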